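/- There exists a constant c ∈ (0,1), depending only on R, such that for every integer p ≥ 1, every u ∈ ℝ^{n×p} (rows u_i ∈ ℝ^p), and every a ∈ ℝ^p: ‖Ru − 𝟏aᵀ‖_φ² ≤ ‖u − 𝟏aᵀ‖_φ² − c²·‖u − 𝟏(φᵀu)‖_φ², where 𝟏aᵀ is the matrix all of whose rows equal a and 𝟏(φᵀu) is the matrix all of whose rows equal Σ_{i=1}^n φ_i u_i. In particular, taking a = φᵀu, one gets ‖Ru − 𝟏(φᵀu)‖_φ ≤ √(1 − c²)·‖u − 𝟏(φᵀu)‖_φ with √(1 − c²) ∈ (0,1). -/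

import Mathlib

open Finset

lemma jensen_sq {E : Type*} [NormedAddCommGroup E] [InnerProductSpace ℝ E]
    {n : ℕ} (r : Fin n → ℝ) (w : Fin n → E) (h1 : ∑ j, r j = 1) :
    ‖∑ j, r j • w j‖ ^ 2 =
      (∑ j, r j * ‖w j‖ ^ 2) -
        (1/2) * ∑ j, ∑ k, r j * r k * ‖w j - w k‖ ^ 2 := by
  have hnorm : ‖∑ j, r j • w j‖ ^ 2 =
      ∑ j, ∑ k, r j * r k * (inner ℝ (w j) (w k) : ℝ) := by
    rw [← real_inner_self_eq_norm_sq, sum_inner]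
    refine Finset.sum_congr rfl fun j _ => ?_
    rw [real_inner_smul_left, inner_sum, Finset.mul_sum]
    refine Finset.sum_congr rfl fun k _ => ?_
    rw [real_inner_smul_right]; ring
  have hsub : ∀ j k : Fin n, ‖w j - w k‖ ^ 2 =
      ‖w j‖ ^ 2 - 2 * (inner ℝ (w j) (w k) : ℝ) + ‖w k‖ ^ 2 := by
    intro j k
    rw [← real_inner_self_eq_norm_sq, ← real_inner_self_eq_norm_sq,
      ← real_inner_self_eq_norm_sq, inner_sub_sub_self, real_inner_comm (w k) (w j)]
    ring
  have hdouble : ∑ j, ∑ k, r j * r k * ‖w j - w k‖ ^ 2 =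
      2 * (∑ j, r j * ‖w j‖ ^ 2) - 2 * ∑ j, ∑ k, r j * r k * (inner ℝ (w j) (w k) : ℝ) := by
    have : ∀ j k : Fin n, r j * r k * ‖w j - w k‖ ^ 2 =
        (r j * ‖w j‖^2) * r k + r j * (r k * ‖w k‖^2)
          - 2 * (r j * r k * (inner ℝ (w j) (w k) : ℝ)) := by
      intro j k; rw [hsub]; ring
    simp only [this, Finset.sum_sub_distrib, Finset.sum_add_distrib, ← Finset.sum_mul,
      ← Finset.mul_sum, h1]
    ring
  rw [hnorm, hdouble]; ring

lemma pow_entry_nonneg {n : ℕ} (R : Matrix (Fin n) (Fin n) ℝ)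
    (hR : ∀ i j, 0 ≤ R i j) : ∀ (k : ℕ) (i j : Fin n), 0 ≤ (R ^ k) i j := by
  intro k
  induction k with
  | zero => intro i j; simp [Matrix.one_apply]; split <;> norm_num
  | succ k ih =>
    intro i j
    rw [pow_succ, Matrix.mul_apply]
    exact Finset.sum_nonneg fun m _ => mul_nonneg (ih i m) (hR m j)

lemma chain_of_pow_pos {n : ℕ} (R : Matrix (Fin n) (Fin n) ℝ)
    (hR : ∀ i j, 0 ≤ R i j) :
    ∀ (k : ℕ) (i j : Fin n), 0 < (R ^ k) i j →
    ∃ x : ℕ → Fin n, x 0 = i ∧ x k = j ∧ ∀ t < k, 0 < R (x t) (x (t+1)) := by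
  intro k
  induction k with
  | zero =>
    intro i j h
    simp only [pow_zero, Matrix.one_apply] at h
    split at h
    case isTrue heq => exact ⟨fun _ => i, rfl, heq, by omega⟩
    case isFalse => norm_num at h
  | succ k ih =>
    intro i j h
    rw [pow_succ, Matrix.mul_apply] at h
    obtain ⟨m, -, hm⟩ := Finset.exists_lt_of_sum_lt (f := fun _ => (0:ℝ))
      (g := fun m => (R ^ k) i m * R m j) (by simpa using h)
    have h1 : 0 < (R ^ k) i m := by
      rcases (mul_pos_iff.mp hm) with ⟨a, b⟩ | ⟨a, b⟩
      · exact a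
      · exact absurd b (not_lt.mpr (hR m j))
    have h2 : 0 < R m j := by
      rcases (mul_pos_iff.mp hm) with ⟨a, b⟩ | ⟨a, b⟩
      · exact b
      · exact absurd a (not_lt.mpr (pow_entry_nonneg R hR k i m))
    obtain ⟨x, hx0, hxk, hxs⟩ := ih i m h1
    refine ⟨fun t => if t ≤ k then x t else j, by simpa using hx0, by simp, ?_⟩
    intro t ht
    rcases Nat.lt_or_ge t k with h' | h'
    · simpa [Nat.le_of_lt h', Nat.succ_le_of_lt h'] using hxs t h'
    · have : t = k := by omega
      subst this
      simpa [hxk] using h2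

lemma telescope_sq {E : Type*} [NormedAddCommGroup E] (v : ℕ → E) (k : ℕ) :
    ‖v 0 - v k‖ ^ 2 ≤ (k : ℝ) * ∑ t ∈ Finset.range k, ‖v t - v (t+1)‖ ^ 2 := by
  have ht : v 0 - v k = ∑ t ∈ Finset.range k, (v t - v (t+1)) :=
    (Finset.sum_range_sub' v k).symm
  have h1 : ‖v 0 - v k‖ ≤ ∑ t ∈ Finset.range k, ‖v t - v (t+1)‖ := by
    rw [ht]; exact norm_sum_le _ _
  calc ‖v 0 - v k‖ ^ 2 ≤ (∑ t ∈ Finset.range k, ‖v t - v (t+1)‖) ^ 2 := by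
        exact pow_le_pow_left₀ (norm_nonneg _) h1 2
    _ ≤ (k : ℝ) * ∑ t ∈ Finset.range k, ‖v t - v (t+1)‖ ^ 2 := by
        have := sq_sum_le_card_mul_sum_sq (s := Finset.range k)
          (f := fun t => ‖v t - v (t+1)‖)
        simpa using this

set_option maxHeartbeats 1000000 in
/-- Strict contraction of a row-stochastic, irreducible matrix with
positive diagonal in the `φ`-weighted norm: there is `c ∈ (0,1)` (depending only on
`R`) such that for all `p ≥ 1`, `u ∈ ℝ^{n×p}` and `a ∈ ℝ^p`,
`‖Ru − 𝟏aᵀ‖_φ² ≤ ‖u − 𝟏aᵀ‖_φ² − c² ‖u − 𝟏(φᵀu)‖_φ²`; in particular, with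
`a = φᵀu`, `‖Ru − 𝟏(φᵀu)‖_φ ≤ √(1−c²) ‖u − 𝟏(φᵀu)‖_φ` with `√(1−c²) ∈ (0,1)`. -/
theorem row_stochastic_contraction
    (n : ℕ)
    (R : Matrix (Fin n) (Fin n) ℝ)
    (hRnonneg : ∀ i j, 0 ≤ R i j)
    (hRrow : ∀ i, ∑ j, R i j = 1)
    (hRdiag : ∀ i, 0 < R i i)
    (hRirr : ∀ i j, ∃ k : ℕ, 1 ≤ k ∧ 0 < (R ^ k) i j)
    (φ : Fin n → ℝ)
    (hφpos : ∀ i, 0 < φ i)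
    (hφ : Matrix.vecMul φ R = φ)
    (hφsum : ∑ i, φ i = 1) :
    ∃ c : ℝ, 0 < c ∧ c < 1 ∧
      (∀ p : ℕ, 1 ≤ p → ∀ (u : Fin n → EuclideanSpace ℝ (Fin p)) (a : EuclideanSpace ℝ (Fin p)),
        ∑ i, φ i * ‖(∑ j, R i j • u j) - a‖ ^ 2
          ≤ (∑ i, φ i * ‖u i - a‖ ^ 2)
            - c ^ 2 * ∑ i, φ i * ‖u i - (∑ j, φ j • u j)‖ ^ 2) ∧
      0 < Real.sqrt (1 - c ^ 2) ∧ Real.sqrt (1 - c ^ 2) < 1 ∧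
      (∀ p : ℕ, 1 ≤ p → ∀ u : Fin n → EuclideanSpace ℝ (Fin p),
        Real.sqrt (∑ i, φ i * ‖(∑ j, R i j • u j) - (∑ j, φ j • u j)‖ ^ 2)
          ≤ Real.sqrt (1 - c ^ 2) *
            Real.sqrt (∑ i, φ i * ‖u i - (∑ j, φ j • u j)‖ ^ 2)) := by
  -- n is positive
  have hn : 0 < n := by
    rcases Nat.eq_zero_or_pos n with h | h
    · subst h; simp at hφsum
    · exact h
  haveI : Nonempty (Fin n) := ⟨⟨0, hn⟩⟩
  have hφR : ∀ j, ∑ i, φ i * R i j = φ j := by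
    intro j
    have := congrFun hφ j
    simpa [Matrix.vecMul, dotProduct] using this
  -- δ : minimal diagonal entry
  set δ : ℝ := Finset.univ.inf' Finset.univ_nonempty (fun i => R i i) with hδdef
  have hδpos : 0 < δ := (Finset.lt_inf'_iff _).mpr fun i _ => hRdiag i
  have hδle : ∀ i, δ ≤ R i i := fun i => Finset.inf'_le _ (Finset.mem_univ i)
  -- m : minimal positive weighted edge
  set S : Finset (Fin n × Fin n) := Finset.univ.filter (fun q => 0 < R q.1 q.2) with hSdef
  have hSne : S.Nonempty := ⟨(⟨0, hn⟩, ⟨0, hn⟩), by rw [hSdef]; exact Finset.mem_filter.mpr ⟨Finset.mem_univ _, hRdiag _⟩⟩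
  set m : ℝ := S.inf' hSne (fun q => φ q.1 * R q.1 q.2) with hmdef
  have hmpos : 0 < m := by
    refine (Finset.lt_inf'_iff _).mpr fun q hq => ?_
    have : 0 < R q.1 q.2 := by simpa [hSdef] using (Finset.mem_filter.mp hq).2
    exact mul_pos (hφpos _) this
  have hmle : ∀ a b, 0 < R a b → m ≤ φ a * R a b := by
    intro a b h
    exact Finset.inf'_le _ (show (a, b) ∈ S by rw [hSdef]; exact Finset.mem_filter.mpr ⟨Finset.mem_univ _, h⟩)
  -- K : max path length
  set K : ℕ := Finset.univ.sup (fun q : Fin n × Fin n => (hRirr q.1 q.2).choose) with hKdef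
  have hKle : ∀ i j, (hRirr i j).choose ≤ K := fun i j =>
    Finset.le_sup (f := fun q : Fin n × Fin n => (hRirr q.1 q.2).choose) (Finset.mem_univ (i, j))
  have hK1 : 1 ≤ K := by
    obtain i : Fin n := ⟨0, hn⟩
    exact le_trans (hRirr i i).choose_spec.1 (hKle i i)
  have hKpos : (0:ℝ) < (K:ℝ) ^ 2 := by positivity
  -- the constant
  set γ : ℝ := δ * m / (K:ℝ) ^ 2 with hγdef
  have hγpos : 0 < γ := by positivity
  set c : ℝ := min (Real.sqrt γ) (1/2) with hcdef
  have hcpos : 0 < c := lt_min (Real.sqrt_pos.mpr hγpos) (by norm_num)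
  have hclt1 : c < 1 := lt_of_le_of_lt (min_le_right _ _) (by norm_num)
  have hc2γ : c ^ 2 ≤ γ := by
    calc c ^ 2 ≤ (Real.sqrt γ) ^ 2 :=
          pow_le_pow_left₀ hcpos.le (min_le_left _ _) 2
      _ = γ := Real.sq_sqrt hγpos.le
  have hc2lt1 : c ^ 2 < 1 := by nlinarith
  -- the main quantitative inequality
  have main : ∀ (p : ℕ) (u : Fin n → EuclideanSpace ℝ (Fin p)) (a : EuclideanSpace ℝ (Fin p)),
      ∑ i, φ i * ‖(∑ j, R i j • u j) - a‖ ^ 2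
        ≤ (∑ i, φ i * ‖u i - a‖ ^ 2)
          - c ^ 2 * ∑ i, φ i * ‖u i - (∑ j, φ j • u j)‖ ^ 2 := by
    intro p u a
    set Eu : ℝ := ∑ i, ∑ j, φ i * R i j * ‖u i - u j‖ ^ 2 with hEudef
    set Du : ℝ := (1/2) * ∑ i, φ i * ∑ j, ∑ k, R i j * R i k * ‖u j - u k‖ ^ 2 with hDudef
    set Pu : ℝ := ∑ i, φ i * ‖u i - (∑ j, φ j • u j)‖ ^ 2 with hPudef
    have hEunonneg : 0 ≤ Eu := by
      refine Finset.sum_nonneg fun i _ => Finset.sum_nonneg fun j _ => ?_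
      exact mul_nonneg (mul_nonneg (hφpos i).le (hRnonneg i j)) (sq_nonneg _)
    have hPunonneg : 0 ≤ Pu := by
      refine Finset.sum_nonneg fun i _ => mul_nonneg (hφpos i).le (sq_nonneg _)
    -- the single-term bound for Eu
    have hterm : ∀ b1 b2 : Fin n, φ b1 * R b1 b2 * ‖u b1 - u b2‖ ^ 2 ≤ Eu := by
      intro b1 b2
      calc φ b1 * R b1 b2 * ‖u b1 - u b2‖ ^ 2
          ≤ ∑ j, φ b1 * R b1 j * ‖u b1 - u j‖ ^ 2 :=
            Finset.single_le_sum (f := fun j => φ b1 * R b1 j * ‖u b1 - u j‖ ^ 2)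
              (fun j _ => mul_nonneg (mul_nonneg (hφpos b1).le (hRnonneg b1 j)) (sq_nonneg _))
              (Finset.mem_univ b2)
        _ ≤ Eu := by
            rw [hEudef]
            exact Finset.single_le_sum
              (f := fun i => ∑ j, φ i * R i j * ‖u i - u j‖ ^ 2)
              (fun i _ => Finset.sum_nonneg fun j _ =>
                mul_nonneg (mul_nonneg (hφpos i).le (hRnonneg i j)) (sq_nonneg _))
              (Finset.mem_univ b1)
    -- identity
    have hident : ∑ i, φ i * ‖(∑ j, R i j • u j) - a‖ ^ 2
        = (∑ i, φ i * ‖u i - a‖ ^ 2) - Du := by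
      have hveci : ∀ i : Fin n, (∑ j, R i j • u j) - a = ∑ j, R i j • (u j - a) := by
        intro i
        have h1 : ∑ j, R i j • (u j - a) = (∑ j, R i j • u j) - (∑ j, R i j • a) := by
          simp [smul_sub, Finset.sum_sub_distrib]
        rw [h1, ← Finset.sum_smul, hRrow i, one_smul]
      have hper : ∀ i : Fin n, ‖(∑ j, R i j • u j) - a‖ ^ 2
          = (∑ j, R i j * ‖u j - a‖ ^ 2)
            - (1/2) * ∑ j, ∑ k, R i j * R i k * ‖u j - u k‖ ^ 2 := by
        intro i
        rw [hveci i, jensen_sq (R i) (fun j => u j - a) (hRrow i)]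
        have hcanc : ∀ j k : Fin n, (u j - a) - (u k - a) = u j - u k := fun j k =>
          sub_sub_sub_cancel_right _ _ _
        simp only [hcanc]
      calc ∑ i, φ i * ‖(∑ j, R i j • u j) - a‖ ^ 2
          = ∑ i, (φ i * (∑ j, R i j * ‖u j - a‖ ^ 2)
              - (1/2) * (φ i * ∑ j, ∑ k, R i j * R i k * ‖u j - u k‖ ^ 2)) := by
            refine Finset.sum_congr rfl fun i _ => ?_
            rw [hper i]; ring
        _ = (∑ i, φ i * ∑ j, R i j * ‖u j - a‖ ^ 2) - Du := by
            rw [Finset.sum_sub_distrib, hDudef, Finset.mul_sum]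
        _ = (∑ i, φ i * ‖u i - a‖ ^ 2) - Du := by
            congr 1
            simp only [Finset.mul_sum, ← mul_assoc]
            rw [Finset.sum_comm]
            refine Finset.sum_congr rfl fun j _ => ?_
            rw [← Finset.sum_mul, hφR j]
    -- Dirichlet lower bound
    have hDE : δ * Eu ≤ Du := by
      have inner : ∀ i : Fin n, 2 * (δ * ∑ j, R i j * ‖u i - u j‖ ^ 2)
          ≤ ∑ j, ∑ k, R i j * R i k * ‖u j - u k‖ ^ 2 := by
        intro i
        have hnn : ∀ j k : Fin n, 0 ≤ R i j * R i k * ‖u j - u k‖ ^ 2 := fun j k =>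
          mul_nonneg (mul_nonneg (hRnonneg i j) (hRnonneg i k)) (sq_nonneg _)
        have hsnn : 0 ≤ ∑ j, R i j * ‖u i - u j‖ ^ 2 :=
          Finset.sum_nonneg fun j _ => mul_nonneg (hRnonneg i j) (sq_nonneg _)
        have hsplit : (∑ k, R i i * R i k * ‖u i - u k‖ ^ 2)
            + ∑ j ∈ Finset.univ.erase i, ∑ k, R i j * R i k * ‖u j - u k‖ ^ 2
            = ∑ j, ∑ k, R i j * R i k * ‖u j - u k‖ ^ 2 :=
          Finset.add_sum_erase _ (fun j => ∑ k, R i j * R i k * ‖u j - u k‖ ^ 2) (Finset.mem_univ i)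
        have h2 : ∑ j ∈ Finset.univ.erase i, R i j * R i i * ‖u j - u i‖ ^ 2
            ≤ ∑ j ∈ Finset.univ.erase i, ∑ k, R i j * R i k * ‖u j - u k‖ ^ 2 :=
          Finset.sum_le_sum fun j _ =>
            Finset.single_le_sum (f := fun k => R i j * R i k * ‖u j - u k‖ ^ 2)
              (fun k _ => hnn j k) (Finset.mem_univ i)
        have h3 : ∑ j ∈ Finset.univ.erase i, R i j * R i i * ‖u j - u i‖ ^ 2
            = ∑ j, R i j * R i i * ‖u j - u i‖ ^ 2 :=
          Finset.sum_erase _ (by simp)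
        have e1 : δ * ∑ j, R i j * ‖u i - u j‖ ^ 2
            ≤ ∑ k, R i i * R i k * ‖u i - u k‖ ^ 2 := by
          have heq : ∑ k, R i i * R i k * ‖u i - u k‖ ^ 2
              = R i i * ∑ k, R i k * ‖u i - u k‖ ^ 2 := by
            rw [Finset.mul_sum]
            exact Finset.sum_congr rfl fun k _ => by ring
          rw [heq]
          exact mul_le_mul_of_nonneg_right (hδle i) hsnn
        have e2 : δ * ∑ j, R i j * ‖u i - u j‖ ^ 2
            ≤ ∑ j, R i j * R i i * ‖u j - u i‖ ^ 2 := by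
          have heq : ∑ j, R i j * R i i * ‖u j - u i‖ ^ 2
              = R i i * ∑ j, R i j * ‖u i - u j‖ ^ 2 := by
            rw [Finset.mul_sum]
            exact Finset.sum_congr rfl fun j _ => by rw [norm_sub_rev]; ring
          rw [heq]
          exact mul_le_mul_of_nonneg_right (hδle i) hsnn
        linarith
      calc δ * Eu = ∑ i, φ i * (δ * ∑ j, R i j * ‖u i - u j‖ ^ 2) := by
            rw [hEudef, Finset.mul_sum]
            refine Finset.sum_congr rfl fun i _ => ?_
            simp only [Finset.mul_sum]
            exact Finset.sum_congr rfl fun j _ => by ring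
        _ ≤ ∑ i, (1/2) * (φ i * ∑ j, ∑ k, R i j * R i k * ‖u j - u k‖ ^ 2) := by
            refine Finset.sum_le_sum fun i _ => ?_
            have h := mul_le_mul_of_nonneg_left (inner i) (hφpos i).le
            nlinarith [h]
        _ = Du := by rw [hDudef, Finset.mul_sum]
    -- Poincaré pointwise
    have hpoin : ∀ i j : Fin n, m * ‖u i - u j‖ ^ 2 ≤ (K:ℝ) ^ 2 * Eu := by
      intro i j
      have hkspec := (hRirr i j).choose_spec
      set k := (hRirr i j).choose with hkdef
      obtain ⟨x, hx0, hxk, hxs⟩ := chain_of_pow_pos R hRnonneg k i j hkspec.2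
      have hedge : ∀ t, t < k → m * ‖u (x t) - u (x (t+1))‖ ^ 2 ≤ Eu := by
        intro t ht
        have h1 : m ≤ φ (x t) * R (x t) (x (t+1)) := hmle _ _ (hxs t ht)
        have h2 := hterm (x t) (x (t+1))
        nlinarith [sq_nonneg ‖u (x t) - u (x (t+1))‖]
      have htel : ‖u i - u j‖ ^ 2
          ≤ (k:ℝ) * ∑ t ∈ Finset.range k, ‖u (x t) - u (x (t+1))‖ ^ 2 := by
        have h := telescope_sq (fun t => u (x t)) k
        rw [hx0, hxk] at h
        exact h
      have hsum : ∑ t ∈ Finset.range k, m * ‖u (x t) - u (x (t+1))‖ ^ 2 ≤ (k:ℝ) * Eu := by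
        calc ∑ t ∈ Finset.range k, m * ‖u (x t) - u (x (t+1))‖ ^ 2
            ≤ ∑ _t ∈ Finset.range k, Eu :=
              Finset.sum_le_sum fun t ht => hedge t (Finset.mem_range.mp ht)
          _ = (k:ℝ) * Eu := by rw [Finset.sum_const, Finset.card_range, nsmul_eq_mul]
      have hkK : (k:ℝ) ≤ (K:ℝ) := Nat.cast_le.mpr (hkdef ▸ hKle i j)
      have hknn : (0:ℝ) ≤ (k:ℝ) := Nat.cast_nonneg k
      calc m * ‖u i - u j‖ ^ 2
          ≤ m * ((k:ℝ) * ∑ t ∈ Finset.range k, ‖u (x t) - u (x (t+1))‖ ^ 2) :=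
            mul_le_mul_of_nonneg_left htel hmpos.le
        _ = (k:ℝ) * ∑ t ∈ Finset.range k, m * ‖u (x t) - u (x (t+1))‖ ^ 2 := by
            rw [← Finset.mul_sum]; ring
        _ ≤ (k:ℝ) * ((k:ℝ) * Eu) := mul_le_mul_of_nonneg_left hsum hknn
        _ ≤ (K:ℝ) ^ 2 * Eu := by
            have hkk : (k:ℝ) * (k:ℝ) ≤ (K:ℝ) * (K:ℝ) :=
              mul_le_mul hkK hkK hknn (Nat.cast_nonneg K)
            nlinarith [mul_le_mul_of_nonneg_right hkk hEunonneg]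
    -- Poincaré
    have hPQ : m * Pu ≤ (K:ℝ) ^ 2 * Eu := by
      have hstepa : Pu ≤ ∑ i, φ i * ∑ j, φ j * ‖u i - u j‖ ^ 2 := by
        rw [hPudef]
        refine Finset.sum_le_sum fun i _ => ?_
        refine mul_le_mul_of_nonneg_left ?_ (hφpos i).le
        have hvec : ∑ j, φ j • (u i - u j) = u i - ∑ j, φ j • u j := by
          have h1 : ∑ j, φ j • (u i - u j) = (∑ j, φ j • u i) - (∑ j, φ j • u j) := by
            simp [smul_sub, Finset.sum_sub_distrib]
          rw [h1, ← Finset.sum_smul, hφsum, one_smul]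
        have hj := jensen_sq φ (fun j => u i - u j) hφsum
        rw [hvec] at hj
        have hnn : 0 ≤ ∑ j, ∑ k, φ j * φ k * ‖(u i - u j) - (u i - u k)‖ ^ 2 :=
          Finset.sum_nonneg fun j _ => Finset.sum_nonneg fun k _ =>
            mul_nonneg (mul_nonneg (hφpos j).le (hφpos k).le) (sq_nonneg _)
        linarith
      have hQ : m * (∑ i, φ i * ∑ j, φ j * ‖u i - u j‖ ^ 2) ≤ (K:ℝ) ^ 2 * Eu := by
        have h1 : ∀ i, ∑ j, φ j * (m * ‖u i - u j‖ ^ 2) ≤ ∑ j, φ j * ((K:ℝ) ^ 2 * Eu) :=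
          fun i => Finset.sum_le_sum fun j _ =>
            mul_le_mul_of_nonneg_left (hpoin i j) (hφpos j).le
        calc m * ∑ i, φ i * ∑ j, φ j * ‖u i - u j‖ ^ 2
            = ∑ i, φ i * ∑ j, φ j * (m * ‖u i - u j‖ ^ 2) := by
              simp only [Finset.mul_sum]
              exact Finset.sum_congr rfl fun i _ => Finset.sum_congr rfl fun j _ => by ring
          _ ≤ ∑ i, φ i * ∑ j, φ j * ((K:ℝ) ^ 2 * Eu) :=
              Finset.sum_le_sum fun i _ => mul_le_mul_of_nonneg_left (h1 i) (hφpos i).le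
          _ = (K:ℝ) ^ 2 * Eu := by
              rw [show (∑ j, φ j * ((K:ℝ) ^ 2 * Eu)) = (K:ℝ) ^ 2 * Eu by
                rw [← Finset.sum_mul, hφsum, one_mul]]
              rw [← Finset.sum_mul, hφsum, one_mul]
      calc m * Pu ≤ m * ∑ i, φ i * ∑ j, φ j * ‖u i - u j‖ ^ 2 :=
            mul_le_mul_of_nonneg_left hstepa hmpos.le
        _ ≤ (K:ℝ) ^ 2 * Eu := hQ
    -- assemble
    have hKey : c ^ 2 * Pu ≤ Du := by
      have h1 : c ^ 2 * (K:ℝ) ^ 2 ≤ δ * m := by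
        have := (le_div_iff₀ hKpos).mp hc2γ
        linarith
      nlinarith [mul_le_mul_of_nonneg_left hPQ hδpos.le,
        mul_le_mul_of_nonneg_right h1 hPunonneg]
    rw [hident]
    linarith
  refine ⟨c, hcpos, hclt1, fun p _ u a => main p u a, ?_, ?_, ?_⟩
  · exact Real.sqrt_pos.mpr (by linarith)
  · have : Real.sqrt (1 - c ^ 2) < Real.sqrt 1 :=
      Real.sqrt_lt_sqrt (by nlinarith) (by nlinarith)
    simpa using this
  · intro p hp u
    have h := main p u (∑ j, φ j • u j)
    have hPnn : 0 ≤ ∑ i, φ i * ‖u i - (∑ j, φ j • u j)‖ ^ 2 :=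
      Finset.sum_nonneg fun i _ => mul_nonneg (hφpos i).le (sq_nonneg _)
    have h2 : ∑ i, φ i * ‖(∑ j, R i j • u j) - (∑ j, φ j • u j)‖ ^ 2
        ≤ (1 - c ^ 2) * ∑ i, φ i * ‖u i - (∑ j, φ j • u j)‖ ^ 2 := by
      linarith [h, mul_le_mul_of_nonneg_right (le_refl (1 - c^2)) hPnn]
    calc Real.sqrt (∑ i, φ i * ‖(∑ j, R i j • u j) - (∑ j, φ j • u j)‖ ^ 2)
        ≤ Real.sqrt ((1 - c ^ 2) * ∑ i, φ i * ‖u i - (∑ j, φ j • u j)‖ ^ 2) :=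
          Real.sqrt_le_sqrt h2
      _ = Real.sqrt (1 - c ^ 2) * Real.sqrt (∑ i, φ i * ‖u i - (∑ j, φ j • u j)‖ ^ 2) :=
          Real.sqrt_mul (by nlinarith) _
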